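/- For 0 < p < 1, 2·p·(1-p) ≤ 1/2 < 1, hence for any c ∈ (0,1) the eigenvalues ±c·sqrt(2p(1-p)) of the two-cell Jacobian at (1/2,1/2) have absolute value strictly less than 1; therefore the equilibrium (1/2,1/2) is asymptotically stable for every coupling c ∈ (0,1), affinity p ∈ (0,1), and any r (since the logistic term vanishes there). -/
import Mathlib


theorem stmt_15 (p : ℝ) (hp : 0 < p) (hp1 : p < 1) :
    2 * p * (1 - p) ≤ 1/2 ∧ (1/2 : ℝ) < 1 ∧
    ∀ c : ℝ, c ∈ Set.Ioo (0:ℝ) 1 →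
      |c * Real.sqrt (2 * p * (1 - p))| < 1 ∧
      |-(c * Real.sqrt (2 * p * (1 - p)))| < 1 ∧
      ∀ lam : ℝ,
        (!![0, c * p * (1/2 : ℝ) ^ (p - 1);
            c * (1 - p) * (1/2 : ℝ) ^ (-p), 0] : Matrix (Fin 2) (Fin 2) ℝ).charpoly.IsRoot lam →
          |lam| < 1 := by
  have hs : 2 * p * (1 - p) ≤ 1/2 := by nlinarith [sq_nonneg (p - 1/2)]
  have hs0 : 0 ≤ 2 * p * (1 - p) := by nlinarith
  refine ⟨hs, by norm_num, ?_⟩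
  rintro c ⟨hc0, hc1⟩
  have hc2 : c ^ 2 < 1 := by nlinarith
  have hsq : Real.sqrt (2 * p * (1 - p)) ^ 2 = 2 * p * (1 - p) := Real.sq_sqrt hs0
  have habs : |c * Real.sqrt (2 * p * (1 - p))| < 1 := by
    have h1 : (c * Real.sqrt (2 * p * (1 - p))) ^ 2 < 1 := by
      rw [mul_pow, hsq]; nlinarith
    nlinarith [abs_nonneg (c * Real.sqrt (2 * p * (1 - p))),
      sq_abs (c * Real.sqrt (2 * p * (1 - p)))]
  refine ⟨habs, by rwa [abs_neg], ?_⟩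
  intro lam hlam
  have hpow : ((1:ℝ)/2) ^ (p - 1) * ((1:ℝ)/2) ^ (-p) = 2 := by
    rw [← Real.rpow_add (by norm_num : (0:ℝ) < 1/2),
      show p - 1 + -p = -1 by ring, Real.rpow_neg_one]
    norm_num
  set b : ℝ := c * p * (1/2 : ℝ) ^ (p - 1) with hb
  set d : ℝ := c * (1 - p) * (1/2 : ℝ) ^ (-p) with hd
  set M : Matrix (Fin 2) (Fin 2) ℝ := !![0, b; d, 0] with hM
  have hbd : b * d = 2 * c ^ 2 * p * (1 - p) := by
    rw [hb, hd]; linear_combination (c ^ 2 * p * (1 - p)) * hpow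
  have hcp : M.charpoly = Polynomial.X ^ 2 - Polynomial.C (b * d) := by
    rw [Matrix.charpoly, Matrix.det_fin_two]
    simp [Matrix.charmatrix_apply, hM, Matrix.diagonal]
    ring
  rw [hcp] at hlam
  have heval : lam ^ 2 - b * d = 0 := by simpa using hlam
  have hlam2 : lam ^ 2 = 2 * c ^ 2 * p * (1 - p) := by rw [← hbd]; linarith
  have h1 : lam ^ 2 < 1 := by rw [hlam2]; nlinarith
  nlinarith [abs_nonneg lam, sq_abs lam]
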